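/- For every real number θ, define ECR^{θ/π} = exp(iθ(σx⊗σz)/8) · (I⊗X) · exp(−iθ(σx⊗σz)/8). Then (I⊗X) · ECR^{θ/π} · (exp(iθσx/4) ⊗ exp(iθσz/4)) = e^{iθ/4} · C(θ), where C(θ) is the controlled operation that acts as the identity on the first tensor factor when the second factor is |0⟩ and as e^{−iθ/2}·R_X(−θ) on the first tensor factor when the second factor is |1⟩, with R_X(φ) = exp(−iφσx/2). -/

import Mathlib

open Matrix Complex
open scoped Matrix Kronecker

set_option maxHeartbeats 8000000

lemma exp_idem {n : Type*} [Fintype n] [DecidableEq n] (P : Matrix n n ℂ)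
    (h : P * P = P) (c : ℂ) :
    NormedSpace.exp (c • P) = 1 + (Complex.exp c - 1) • P := by
  letI : SeminormedRing (Matrix n n ℂ) := Matrix.linftyOpSemiNormedRing
  letI : NormedRing (Matrix n n ℂ) := Matrix.linftyOpNormedRing
  letI : NormedAlgebra ℂ (Matrix n n ℂ) := Matrix.linftyOpNormedAlgebra
  have hPn : ∀ k : ℕ, P ^ (k + 1) = P := by
    intro k
    induction k with
    | zero => simp
    | succ k ih => rw [pow_succ, ih, h]
  have hsum : Summable fun k : ℕ => (((k.factorial : ℂ)⁻¹) • (c • P) ^ k) :=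
    NormedSpace.expSeries_summable' (c • P)
  have hcsum : Summable fun k : ℕ => (((k.factorial : ℂ)⁻¹) * c ^ k) := by
    simpa [smul_eq_mul] using NormedSpace.expSeries_summable' (𝕂 := ℂ) c
  have hcsum' : Summable fun k : ℕ => ((((k+1).factorial : ℂ)⁻¹) * c ^ (k+1)) := by
    exact (summable_nat_add_iff 1).mpr hcsum
  have key : (fun k : ℕ => (((k+1).factorial : ℂ)⁻¹) • (c • P) ^ (k+1))
      = fun k : ℕ => ((((k+1).factorial : ℂ)⁻¹) * c ^ (k+1)) • P := by
    funext k
    rw [smul_pow, hPn, smul_smul]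
  simp only [NormedSpace.exp_eq_tsum ℂ]
  rw [hsum.tsum_eq_zero_add]
  rw [show (fun k : ℕ => ((((k:ℕ)+1).factorial : ℂ)⁻¹) • (c • P) ^ ((k:ℕ)+1)) = _ from key]
  rw [hcsum'.tsum_smul_const]
  have hexp : Complex.exp c = 1 + ∑' k : ℕ, ((((k+1).factorial : ℂ)⁻¹) * c ^ (k+1)) := by
    rw [Complex.exp_eq_exp_ℂ]
    simp only [NormedSpace.exp_eq_tsum ℂ, smul_eq_mul]
    rw [hcsum.tsum_eq_zero_add]
    simp [smul_eq_mul]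
  rw [hexp]
  simp

lemma exp_invol {n : Type*} [Fintype n] [DecidableEq n] (M : Matrix n n ℂ)
    (h : M * M = 1) (c : ℂ) :
    NormedSpace.exp (c • M) =
      ((Complex.exp c + Complex.exp (-c)) / 2) • 1 +
        ((Complex.exp c - Complex.exp (-c)) / 2) • M := by
  set P : Matrix n n ℂ := (2⁻¹ : ℂ) • (1 + M) with hPdef
  set Q : Matrix n n ℂ := (2⁻¹ : ℂ) • (1 - M) with hQdef
  have hP : P * P = P := by
    simp only [hPdef, smul_mul_assoc, mul_smul_comm, add_mul, mul_add, one_mul, mul_one, h,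
      smul_smul]
    module
  have hQ : Q * Q = Q := by
    simp only [hQdef, smul_mul_assoc, mul_smul_comm, sub_mul, mul_sub, one_mul, mul_one, h,
      smul_smul]
    module
  have hPQ : P * Q = 0 := by
    simp only [hPdef, hQdef, smul_mul_assoc, mul_smul_comm, add_mul, mul_add, mul_sub, sub_mul,
      one_mul, mul_one, h, smul_smul]
    module
  have hQP : Q * P = 0 := by
    simp only [hPdef, hQdef, smul_mul_assoc, mul_smul_comm, add_mul, mul_add, mul_sub, sub_mul,
      one_mul, mul_one, h, smul_smul]
    module
  have hdecomp : c • M = c • P + (-c) • Q := by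
    simp only [hPdef, hQdef, smul_smul, smul_add, smul_sub]
    module
  have hcomm : Commute (c • P) ((-c) • Q) :=
    ((Commute.smul_left (show Commute P Q from hPQ.trans hQP.symm) c).smul_right (-c))
  have hgen : ∀ (A B : Matrix n n ℂ) (a b : ℂ),
      (1 + a • A) * (1 + b • B) = 1 + a • A + b • B + (a * b) • (A * B) := by
    intro A B a b
    rw [add_mul, mul_add, mul_add, one_mul, mul_one, smul_mul_smul_comm, one_mul]
    abel
  rw [hdecomp, Matrix.exp_add_of_commute _ _ hcomm, exp_idem P hP, exp_idem Q hQ, hgen,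
    hPQ, smul_zero, add_zero]
  simp only [hPdef, hQdef, smul_smul, smul_add, smul_sub]
  module

noncomputable section

/-- Pauli matrices -/
def σx : Matrix (Fin 2) (Fin 2) ℂ := !![0, 1; 1, 0]
def σy : Matrix (Fin 2) (Fin 2) ℂ := !![0, -Complex.I; Complex.I, 0]
def σz : Matrix (Fin 2) (Fin 2) ℂ := !![1, 0; 0, -1]

/-- ECR^{θ/π} = e^{iθ(σx⊗σz)/8} (I⊗X) e^{−iθ(σx⊗σz)/8} -/
def ECRpow (θ : ℝ) : Matrix (Fin 2 × Fin 2) (Fin 2 × Fin 2) ℂ :=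
  NormedSpace.exp ((Complex.I * (θ : ℂ) / 8) • (σx ⊗ₖ σz)) *
    ((1 : Matrix (Fin 2) (Fin 2) ℂ) ⊗ₖ σx) *
    NormedSpace.exp ((-(Complex.I * (θ : ℂ)) / 8) • (σx ⊗ₖ σz))

/-- the single-qubit rotation R_X(φ) = exp(−iφσx/2) -/
def Rx (φ : ℝ) : Matrix (Fin 2) (Fin 2) ℂ :=
  NormedSpace.exp ((-(Complex.I * (φ : ℂ)) / 2) • σx)

/-- the controlled gate C(θ): identity on the first factor when the second factor is
|0⟩, and e^{−iθ/2}R_X(−θ) on the first factor when the second factor is |1⟩ -/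
def Cgate (θ : ℝ) : Matrix (Fin 2 × Fin 2) (Fin 2 × Fin 2) ℂ :=
  Matrix.of fun p q =>
    if p.2 = q.2 then
      (if q.2 = 0 then (1 : Matrix (Fin 2) (Fin 2) ℂ) p.1 q.1
       else (Complex.exp (-(Complex.I * (θ : ℂ)) / 2) • Rx (-θ)) p.1 q.1)
    else 0

/-- (I⊗X)·ECR^{θ/π}·(e^{iθσx/4} ⊗ e^{iθσz/4}) = e^{iθ/4}·C(θ). -/
theorem stmt16 (θ : ℝ) :
    ((1 : Matrix (Fin 2) (Fin 2) ℂ) ⊗ₖ σx) * ECRpow θ *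
      (NormedSpace.exp ((Complex.I * (θ : ℂ) / 4) • σx) ⊗ₖ
        NormedSpace.exp ((Complex.I * (θ : ℂ) / 4) • σz)) =
    Complex.exp (Complex.I * (θ : ℂ) / 4) • Cgate θ := by
  have h1 : σx * σx = 1 := by
    simp [σx, Matrix.mul_fin_two, Matrix.one_fin_two]
  have h2 : σz * σz = 1 := by
    simp [σz, Matrix.mul_fin_two, Matrix.one_fin_two]
  have h3 : (σx ⊗ₖ σz) * (σx ⊗ₖ σz) = 1 := by
    rw [← Matrix.mul_kronecker_mul, h1, h2, Matrix.one_kronecker_one]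
  rw [ECRpow, exp_invol _ h3, exp_invol _ h3, exp_invol _ h1, exp_invol _ h2]
  simp only [Cgate, Rx, exp_invol _ h1]
  ext ⟨i, j⟩ ⟨k, l⟩
  fin_cases i <;> fin_cases j <;> fin_cases k <;> fin_cases l <;>
    simp [Matrix.mul_apply, Fintype.sum_prod_type, Fin.sum_univ_two, σx, σz,
      Matrix.kroneckerMap_apply, Matrix.one_apply, Matrix.smul_apply, Matrix.add_apply,
      Prod.ext_iff]
  all_goals {
    have huw : Complex.exp (Complex.I * (θ : ℂ) / 8) * Complex.exp (-(Complex.I * (θ : ℂ) / 8)) = 1 := by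
      rw [← Complex.exp_add]; simp
    have e4 : Complex.exp (Complex.I * (θ : ℂ) / 4) =
        Complex.exp (Complex.I * (θ : ℂ) / 8) * Complex.exp (Complex.I * (θ : ℂ) / 8) := by
      rw [← Complex.exp_add]; congr 1; ring
    have e4' : Complex.exp (-(Complex.I * (θ : ℂ) / 4)) =
        Complex.exp (-(Complex.I * (θ : ℂ) / 8)) * Complex.exp (-(Complex.I * (θ : ℂ) / 8)) := by
      rw [← Complex.exp_add]; congr 1; ring
    have e6 : Complex.exp (Complex.I * (θ : ℂ) / 2) =
        Complex.exp (Complex.I * (θ : ℂ) / 8) * Complex.exp (Complex.I * (θ : ℂ) / 8) *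
          Complex.exp (Complex.I * (θ : ℂ) / 8) * Complex.exp (Complex.I * (θ : ℂ) / 8) := by
      rw [← Complex.exp_add, ← Complex.exp_add, ← Complex.exp_add]; congr 1; ring
    have e6' : Complex.exp (-(Complex.I * (θ : ℂ) / 2)) =
        Complex.exp (-(Complex.I * (θ : ℂ) / 8)) * Complex.exp (-(Complex.I * (θ : ℂ) / 8)) *
          Complex.exp (-(Complex.I * (θ : ℂ) / 8)) * Complex.exp (-(Complex.I * (θ : ℂ) / 8)) := by
      rw [← Complex.exp_add, ← Complex.exp_add, ← Complex.exp_add]; congr 1; ring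
    simp only [show (-(Complex.I * (θ : ℂ)) / 8) = -(Complex.I * (θ : ℂ) / 8) from by ring,
      show (-(Complex.I * (θ : ℂ)) / 2) = -(Complex.I * (θ : ℂ) / 2) from by ring,
      neg_neg, e4, e4', e6, e6']
    set u := Complex.exp (Complex.I * (θ : ℂ) / 8) with hu1
    set w := Complex.exp (-(Complex.I * (θ : ℂ) / 8)) with hw1
    clear_value u w
    first
      | ring1
      | linear_combination (u ^ 2 + u ^ 3 * w) * huw
      | linear_combination ((-1/2 : ℂ) * w ^ 6 + (-1/2 : ℂ) * u * w ^ 7 +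
          (-1/2 : ℂ) * u ^ 4 * w ^ 2 + (-1/2 : ℂ) * u ^ 5 * w ^ 3) * huw
      | linear_combination ((1/2 : ℂ) * w ^ 6 + (1/2 : ℂ) * u * w ^ 7 +
          (-1/2 : ℂ) * u ^ 4 * w ^ 2 + (-1/2 : ℂ) * u ^ 5 * w ^ 3) * huw }
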